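/- Let H be either the logistic cdf H(a) = 1/(1+e^{−a}) or the probit cdf H(a) = Φ(a) (Φ the standard normal cdf), and fix α ∈ ℝ, β > 0. Consider the time-homogeneous Markov chain on the state space ℤ with transition probabilities P(x, x−1) = H(α+βx) and P(x, x+1) = 1 − H(α+βx). Then the chain is irreducible (for all states x, x′ there exists n ≥ 1 with P^n(x, x′) > 0) and positive recurrent (for every state x, the expected first return time to x, starting from x, is finite). -/

import Mathlib

/-- The logistic sigmoid `σ(a) = 1/(1+e^{−a})`. -/
noncomputable def logisticSigmoid (a : ℝ) : ℝ := 1 / (1 + Real.exp (-a))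

/-- The standard normal cumulative distribution function. -/
noncomputable def stdNormalCDF (a : ℝ) : ℝ :=
  ∫ t in Set.Iic a, (Real.sqrt (2 * Real.pi))⁻¹ * Real.exp (-(t ^ 2) / 2)

/-- One-step transition probabilities of the Bruceton chain on `ℤ`:
`P(x, x−1) = H(α+βx)` and `P(x, x+1) = 1 − H(α+βx)`. -/
noncomputable def brucetonP (H : ℝ → ℝ) (α β : ℝ) (x y : ℤ) : ℝ :=
  if y = x - 1 then H (α + β * x) else if y = x + 1 then 1 - H (α + β * x) else 0

/-- `n`-step transition probabilities `Pⁿ(x, y)` of the Bruceton chain. -/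
noncomputable def brucetonPn (H : ℝ → ℝ) (α β : ℝ) : ℕ → ℤ → ℤ → ℝ
  | 0, x, y => if y = x then 1 else 0
  | n + 1, x, y => ∑' z : ℤ, brucetonP H α β x z * brucetonPn H α β n z y

/-- `brucetonFirstHit H α β x₀ n z` is the probability that the chain started at `z`
visits the state `x₀` for the first time at time `n` (avoiding `x₀` at times `1,…,n−1`).
For `z = x₀` this is the probability that the first return to `x₀` occurs at time `n`. -/
noncomputable def brucetonFirstHit (H : ℝ → ℝ) (α β : ℝ) (x₀ : ℤ) : ℕ → ℤ → ℝ
  | 0, _ => 0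
  | 1, z => brucetonP H α β z x₀
  | n + 2, z => ∑' w : ℤ, if w = x₀ then 0 else
      brucetonP H α β z w * brucetonFirstHit H α β x₀ (n + 1) w

section Chain
open Filter Set MeasureTheory Finset

variable (H : ℝ → ℝ) (α β : ℝ)

lemma brucetonP_down (x : ℤ) : brucetonP H α β x (x - 1) = H (α + β * x) := by
  simp [brucetonP]

lemma brucetonP_up (x : ℤ) : brucetonP H α β x (x + 1) = 1 - H (α + β * x) := by
  have h : (x + 1 : ℤ) ≠ x - 1 := by omega
  simp [brucetonP, h]

lemma bruceton_tsum_pair (x : ℤ) (g : ℤ → ℝ) :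
    ∑' z : ℤ, brucetonP H α β x z * g z
      = H (α + β * x) * g (x - 1) + (1 - H (α + β * x)) * g (x + 1) := by
  rw [tsum_eq_sum (s := {x - 1, x + 1}) ?_]
  · rw [Finset.sum_pair (by omega)]
    rw [brucetonP_down, brucetonP_up]
  · intro b hb
    simp only [Finset.mem_insert, Finset.mem_singleton] at hb
    push_neg at hb
    simp [brucetonP, hb.1, hb.2]

lemma bruceton_tsum_pair' (x₀ x : ℤ) (g : ℤ → ℝ) :
    (∑' w : ℤ, if w = x₀ then 0 else brucetonP H α β x w * g w)
      = H (α + β * x) * (if x - 1 = x₀ then 0 else g (x - 1))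
        + (1 - H (α + β * x)) * (if x + 1 = x₀ then 0 else g (x + 1)) := by
  rw [tsum_eq_sum (s := {x - 1, x + 1}) ?_]
  · rw [Finset.sum_pair (by omega)]
    rw [brucetonP_down, brucetonP_up]
    by_cases h1 : x - 1 = x₀ <;> by_cases h2 : x + 1 = x₀ <;> simp [h1, h2] <;> ring
  · intro b hb
    simp only [Finset.mem_insert, Finset.mem_singleton] at hb
    push_neg at hb
    simp [brucetonP, hb.1, hb.2]

lemma brucetonPn_succ (n : ℕ) (x y : ℤ) :
    brucetonPn H α β (n + 1) x y
      = H (α + β * x) * brucetonPn H α β n (x - 1) y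
        + (1 - H (α + β * x)) * brucetonPn H α β n (x + 1) y := by
  rw [brucetonPn, bruceton_tsum_pair]

lemma brucetonFirstHit_succ (x₀ : ℤ) (n : ℕ) (z : ℤ) :
    brucetonFirstHit H α β x₀ (n + 2) z
      = H (α + β * z) * (if z - 1 = x₀ then 0 else brucetonFirstHit H α β x₀ (n + 1) (z - 1))
        + (1 - H (α + β * z))
            * (if z + 1 = x₀ then 0 else brucetonFirstHit H α β x₀ (n + 1) (z + 1)) := by
  rw [brucetonFirstHit, bruceton_tsum_pair']

variable {H α β}
variable (hp : ∀ z : ℤ, 0 < H (α + β * z) ∧ H (α + β * z) < 1)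
include hp

lemma brucetonPn_nonneg (n : ℕ) (x y : ℤ) : 0 ≤ brucetonPn H α β n x y := by
  induction n generalizing x with
  | zero => rw [brucetonPn]; positivity
  | succ n ih =>
      rw [brucetonPn_succ]
      have h1 := (hp x).1
      have h2 := (hp x).2
      have := ih (x - 1)
      have := ih (x + 1)
      nlinarith

lemma brucetonPn_up (m : ℕ) (x : ℤ) : 0 < brucetonPn H α β m x (x + m) := by
  induction m generalizing x with
  | zero => simp [brucetonPn]
  | succ m ih =>
      rw [brucetonPn_succ]
      have h1 := (hp x).1
      have h2 := (hp x).2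
      have hx : (x + ((m : ℤ) + 1)) = (x + 1) + m := by ring
      have hpos : 0 < brucetonPn H α β m (x + 1) (x + ((m : ℤ) + 1)) := by
        rw [hx]; exact ih (x + 1)
      have hnn : 0 ≤ brucetonPn H α β m (x - 1) (x + ((m : ℤ) + 1)) :=
        brucetonPn_nonneg hp m _ _
      push_cast
      nlinarith

lemma brucetonPn_down (m : ℕ) (x : ℤ) : 0 < brucetonPn H α β m x (x - m) := by
  induction m generalizing x with
  | zero => simp [brucetonPn]
  | succ m ih =>
      rw [brucetonPn_succ]
      have h1 := (hp x).1
      have h2 := (hp x).2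
      have hx : (x - ((m : ℤ) + 1)) = (x - 1) - m := by ring
      have hpos : 0 < brucetonPn H α β m (x - 1) (x - ((m : ℤ) + 1)) := by
        rw [hx]; exact ih (x - 1)
      have hnn : 0 ≤ brucetonPn H α β m (x + 1) (x - ((m : ℤ) + 1)) :=
        brucetonPn_nonneg hp m _ _
      push_cast
      nlinarith

lemma brucetonPn_return (x : ℤ) : 0 < brucetonPn H α β 2 x x := by
  have h1 : brucetonPn H α β 1 (x + 1) x = H (α + β * (x + 1)) := by
    rw [brucetonPn_succ]
    have e1 : brucetonPn H α β 0 (x + 1 - 1) x = 1 := by simp [brucetonPn]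
    have e2 : brucetonPn H α β 0 (x + 1 + 1) x = 0 := by
      rw [brucetonPn]; simp; omega
    rw [e1, e2]; push_cast; ring
  rw [brucetonPn_succ]
  have h2 := (hp x).1
  have h3 := (hp x).2
  have h4 := (hp (x + 1)).1
  have hnn : 0 ≤ brucetonPn H α β 1 (x - 1) x := brucetonPn_nonneg hp 1 _ _
  push_cast at h4
  rw [h1]
  nlinarith [mul_pos (sub_pos.2 h3) h4]

end Chain
/-- Partial sums of first-hit probabilities: probability of hitting `x₀` by time `N`. -/
noncomputable def bSum (H : ℝ → ℝ) (α β : ℝ) (x₀ : ℤ) (N : ℕ) (z : ℤ) : ℝ :=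
  ∑ n ∈ Finset.range (N + 1), brucetonFirstHit H α β x₀ n z

/-- Cumulated no-hit probabilities. -/
noncomputable def bW (H : ℝ → ℝ) (α β : ℝ) (x₀ : ℤ) (N : ℕ) (z : ℤ) : ℝ :=
  ∑ k ∈ Finset.range N, (1 - bSum H α β x₀ k z)

section Recurrence

variable (H : ℝ → ℝ) (α β : ℝ) (x₀ : ℤ)

lemma brucetonFirstHit_one (z : ℤ) :
    brucetonFirstHit H α β x₀ 1 z = brucetonP H α β z x₀ := rfl

lemma bSum_eq (N : ℕ) (z : ℤ) :
    bSum H α β x₀ N z = ∑ n ∈ Finset.range N, brucetonFirstHit H α β x₀ (n + 1) z := by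
  rw [bSum, Finset.sum_range_succ']
  simp [brucetonFirstHit]

lemma bSum_zero (z : ℤ) : bSum H α β x₀ 0 z = 0 := by
  simp [bSum, brucetonFirstHit]

lemma bSum_succ (N : ℕ) (z : ℤ) :
    bSum H α β x₀ (N + 1) z = bSum H α β x₀ N z + brucetonFirstHit H α β x₀ (N + 1) z := by
  rw [bSum, bSum, Finset.sum_range_succ]

lemma bSum_rec (N : ℕ) (z : ℤ) :
    bSum H α β x₀ (N + 1) z
      = H (α + β * z) * (if z - 1 = x₀ then 1 else bSum H α β x₀ N (z - 1))
        + (1 - H (α + β * z)) * (if z + 1 = x₀ then 1 else bSum H α β x₀ N (z + 1)) := by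
  rw [bSum_eq H α β x₀ (N + 1) z, Finset.sum_range_succ',
    Finset.sum_congr rfl (fun n _ => brucetonFirstHit_succ H α β x₀ n z),
    Finset.sum_add_distrib]
  rw [brucetonFirstHit_one, bSum_eq H α β x₀ N (z - 1), bSum_eq H α β x₀ N (z + 1)]
  have hne : ¬(z - 1 = x₀ ∧ z + 1 = x₀) := by omega
  by_cases h1 : z - 1 = x₀ <;> by_cases h2 : z + 1 = x₀
  · exact absurd ⟨h1, h2⟩ hne
  · have h2' : x₀ ≠ z + 1 := fun h => h2 h.symm
    simp [brucetonP, h1, h2, h2', ← Finset.mul_sum]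
    try ring
  · have h1' : x₀ ≠ z - 1 := fun h => h1 h.symm
    simp [brucetonP, h1, h2, h1', ← Finset.mul_sum]
    try ring
  · have h1' : x₀ ≠ z - 1 := fun h => h1 h.symm
    have h2' : x₀ ≠ z + 1 := fun h => h2 h.symm
    simp [brucetonP, h1, h2, h1', h2', ← Finset.mul_sum]
    try ring

variable {H α β}
variable (hp : ∀ z : ℤ, 0 < H (α + β * z) ∧ H (α + β * z) < 1)
include hp

lemma brucetonP_nonneg (x y : ℤ) : 0 ≤ brucetonP H α β x y := by
  have h1 := (hp x).1
  have h2 := (hp x).2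
  unfold brucetonP
  split
  · linarith
  · split
    · linarith
    · exact le_rfl

lemma brucetonFirstHit_nonneg (n : ℕ) (z : ℤ) : 0 ≤ brucetonFirstHit H α β x₀ n z := by
  have key : ∀ m : ℕ, ∀ w : ℤ, 0 ≤ brucetonFirstHit H α β x₀ (m + 1) w := by
    intro m
    induction m with
    | zero => intro w; rw [brucetonFirstHit_one]; exact brucetonP_nonneg hp _ _
    | succ m ih =>
        intro w
        rw [brucetonFirstHit_succ]
        have h1 := (hp w).1
        have h2 := (hp w).2
        have hb1 : 0 ≤ (if w - 1 = x₀ then 0 else brucetonFirstHit H α β x₀ (m + 1) (w - 1)) := by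
          split
          · exact le_rfl
          · exact ih _
        have hb2 : 0 ≤ (if w + 1 = x₀ then 0 else brucetonFirstHit H α β x₀ (m + 1) (w + 1)) := by
          split
          · exact le_rfl
          · exact ih _
        nlinarith
  match n with
  | 0 => exact le_rfl
  | m + 1 => exact key m z

lemma bSum_nonneg (N : ℕ) (z : ℤ) : 0 ≤ bSum H α β x₀ N z :=
  Finset.sum_nonneg fun n _ => brucetonFirstHit_nonneg x₀ hp n z

lemma bSum_le_one (N : ℕ) (z : ℤ) : bSum H α β x₀ N z ≤ 1 := by
  induction N generalizing z with
  | zero => rw [bSum_zero]; norm_num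
  | succ N ih =>
      rw [bSum_rec]
      have h1 := (hp z).1
      have h2 := (hp z).2
      have hb1 : (if z - 1 = x₀ then (1:ℝ) else bSum H α β x₀ N (z - 1)) ≤ 1 := by
        split
        · exact le_rfl
        · exact ih _
      have hb2 : (if z + 1 = x₀ then (1:ℝ) else bSum H α β x₀ N (z + 1)) ≤ 1 := by
        split
        · exact le_rfl
        · exact ih _
      nlinarith

lemma bSum_u_nonneg (N : ℕ) (z : ℤ) : 0 ≤ 1 - bSum H α β x₀ N z := by
  have := bSum_le_one x₀ hp N z; linarith

omit hp in
lemma bW_succ (N : ℕ) (z : ℤ) :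
    bW H α β x₀ (N + 1) z
      = 1 + (H (α + β * z) * (if z - 1 = x₀ then 0 else bW H α β x₀ N (z - 1))
        + (1 - H (α + β * z)) * (if z + 1 = x₀ then 0 else bW H α β x₀ N (z + 1))) := by
  rw [bW, Finset.sum_range_succ', bSum_zero]
  have hcong : ∀ k ∈ Finset.range N, 1 - bSum H α β x₀ (k + 1) z
      = H (α + β * z) * (if z - 1 = x₀ then 0 else (1 - bSum H α β x₀ k (z - 1)))
        + (1 - H (α + β * z)) * (if z + 1 = x₀ then 0 else (1 - bSum H α β x₀ k (z + 1))) := by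
    intro k _
    rw [bSum_rec]
    by_cases h1 : z - 1 = x₀ <;> by_cases h2 : z + 1 = x₀ <;> simp [h1, h2] <;> ring
  rw [Finset.sum_congr rfl hcong, Finset.sum_add_distrib, bW, bW]
  by_cases h1 : z - 1 = x₀ <;> by_cases h2 : z + 1 = x₀ <;>
    simp [h1, h2, ← Finset.mul_sum] <;> ring

end Recurrence
section Foster

open Filter

variable {H : ℝ → ℝ} {α β : ℝ}
variable (hp : ∀ z : ℤ, 0 < H (α + β * z) ∧ H (α + β * z) < 1)
include hp

theorem bruceton_posrec (x₀ : ℤ) (V : ℤ → ℝ) (hV0 : ∀ z, 0 ≤ V z)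
    (hVd : ∀ z, z ≠ x₀ →
      H (α + β * z) * V (z - 1) + (1 - H (α + β * z)) * V (z + 1) ≤ V z - 1 / 2) :
    HasSum (fun n : ℕ => brucetonFirstHit H α β x₀ n x₀) 1 ∧
      Summable (fun n : ℕ => (n : ℝ) * brucetonFirstHit H α β x₀ n x₀) := by
  -- Foster bound on cumulated no-hit probabilities
  have hFoster : ∀ N : ℕ, ∀ z : ℤ, z ≠ x₀ → bW H α β x₀ N z ≤ 2 * V z := by
    intro N
    induction N with
    | zero =>
        intro z _
        have : bW H α β x₀ 0 z = 0 := by simp [bW]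
        rw [this]
        have := hV0 z; linarith
    | succ N ih =>
        intro z hz
        rw [bW_succ]
        have h1 := (hp z).1
        have h2 := (hp z).2
        have hb1 : (if z - 1 = x₀ then (0:ℝ) else bW H α β x₀ N (z - 1)) ≤ 2 * V (z - 1) := by
          split
          · have := hV0 (z - 1); linarith
          · exact ih _ (by omega)
        have hb2 : (if z + 1 = x₀ then (0:ℝ) else bW H α β x₀ N (z + 1)) ≤ 2 * V (z + 1) := by
          split
          · have := hV0 (z + 1); linarith
          · exact ih _ (by omega)
        have hd := hVd z hz
        nlinarith
  set K : ℝ := 1 + 2 * (H (α + β * x₀) * V (x₀ - 1) + (1 - H (α + β * x₀)) * V (x₀ + 1)) with hK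
  have hp1 := (hp x₀).1
  have hp2 := (hp x₀).2
  have hV1 := hV0 (x₀ - 1)
  have hV2 := hV0 (x₀ + 1)
  have hK0 : 0 ≤ K := by rw [hK]; nlinarith
  have hWK : ∀ N : ℕ, bW H α β x₀ N x₀ ≤ K := by
    intro N
    match N with
    | 0 => simpa [bW] using hK0
    | N + 1 =>
        rw [bW_succ]
        have e1 : (x₀ - 1 : ℤ) ≠ x₀ := by omega
        have e2 : (x₀ + 1 : ℤ) ≠ x₀ := by omega
        rw [if_neg e1, if_neg e2]
        have f1 := hFoster N (x₀ - 1) e1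
        have f2 := hFoster N (x₀ + 1) e2
        rw [hK]
        nlinarith
  -- monotonicity of partial sums
  have hSmono : ∀ z : ℤ, Monotone (fun N => bSum H α β x₀ N z) := by
    intro z
    apply monotone_nat_of_le_succ
    intro N
    rw [bSum_succ]
    have := brucetonFirstHit_nonneg x₀ hp (N + 1) z
    linarith
  have hu_nonneg : ∀ N : ℕ, ∀ z : ℤ, 0 ≤ 1 - bSum H α β x₀ N z := bSum_u_nonneg x₀ hp
  -- N * u_N ≤ W_N ≤ K
  have hNu : ∀ N : ℕ, (N : ℝ) * (1 - bSum H α β x₀ N x₀) ≤ K := by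
    intro N
    have hcard : (Finset.range N).card • (1 - bSum H α β x₀ N x₀) ≤ bW H α β x₀ N x₀ := by
      apply Finset.card_nsmul_le_sum
      intro k hk
      have hk' : k ≤ N := le_of_lt (Finset.mem_range.mp hk)
      have := hSmono x₀ hk'
      simp only at this
      linarith
    rw [Finset.card_range, nsmul_eq_mul] at hcard
    exact le_trans hcard (hWK N)
  -- u_N → 0
  have htend0 : Tendsto (fun N : ℕ => 1 - bSum H α β x₀ N x₀) atTop (nhds 0) := by
    apply tendsto_of_tendsto_of_tendsto_of_le_of_le' tendsto_const_nhds
      (tendsto_const_div_atTop_nhds_zero_nat K)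
    · exact Eventually.of_forall fun N => hu_nonneg N x₀
    · filter_upwards [Filter.eventually_ge_atTop 1] with N hN
      have hNpos : (0 : ℝ) < N := by exact_mod_cast hN
      rw [le_div_iff₀ hNpos]
      have := hNu N
      linarith [hNu N]
  have htendS : Tendsto (fun N : ℕ => bSum H α β x₀ N x₀) atTop (nhds 1) := by
    have h : Tendsto (fun N : ℕ => 1 - (1 - bSum H α β x₀ N x₀)) atTop (nhds (1 - 0)) :=
      Tendsto.sub (tendsto_const_nhds : Tendsto (fun _ : ℕ => (1:ℝ)) atTop (nhds 1)) htend0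
    simpa using h
  constructor
  · rw [hasSum_iff_tendsto_nat_of_nonneg (fun n => brucetonFirstHit_nonneg x₀ hp n x₀)]
    have : Tendsto
        (fun N : ℕ => ∑ i ∈ Finset.range (N + 1), brucetonFirstHit H α β x₀ i x₀)
        atTop (nhds 1) := htendS
    exact (Filter.tendsto_add_atTop_iff_nat 1).mp this
  · -- expected return time
    have hA : ∀ N : ℕ,
        (∑ n ∈ Finset.range (N + 1), (n : ℝ) * brucetonFirstHit H α β x₀ n x₀)
          + (N : ℝ) * (1 - bSum H α β x₀ N x₀) ≤ bW H α β x₀ N x₀ := by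
      intro N
      induction N with
      | zero => simp [bW, bSum_zero]
      | succ N ih =>
          rw [Finset.sum_range_succ]
          have hsucc : bSum H α β x₀ (N + 1) x₀
              = bSum H α β x₀ N x₀ + brucetonFirstHit H α β x₀ (N + 1) x₀ := bSum_succ _ _ _ _ _ _
          have hWsucc : bW H α β x₀ (N + 1) x₀
              = bW H α β x₀ N x₀ + (1 - bSum H α β x₀ N x₀) := by
            rw [bW, Finset.sum_range_succ, bW]
          push_cast
          rw [hWsucc, hsucc]
          have hu := hu_nonneg N x₀
          push_cast at ih
          linarith
    apply summable_of_sum_range_le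
      (c := K)
      (fun n => mul_nonneg (Nat.cast_nonneg n) (brucetonFirstHit_nonneg x₀ hp n x₀))
    intro n
    match n with
    | 0 => simpa using hK0
    | N + 1 =>
        have h := hA N
        have hu := hu_nonneg N x₀
        have hNnn : (0:ℝ) ≤ (N : ℝ) := Nat.cast_nonneg N
        have := hWK N
        nlinarith

end Foster
section Lyapunov

variable {H : ℝ → ℝ} {α β : ℝ}

theorem bruceton_exists_V (hp : ∀ z : ℤ, 0 < H (α + β * z) ∧ H (α + β * z) < 1)
    (Lm Lp : ℤ) (hLL : Lm ≤ Lp)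
    (hplus : ∀ z : ℤ, Lp + 1 ≤ z → 3 / 4 ≤ H (α + β * z))
    (hminus : ∀ z : ℤ, z ≤ Lm - 1 → H (α + β * z) ≤ 1 / 4)
    (x₀ : ℤ) :
    ∃ V : ℤ → ℝ, (∀ z, 0 ≤ V z) ∧ ∀ z, z ≠ x₀ →
      H (α + β * z) * V (z - 1) + (1 - H (α + β * z)) * V (z + 1) ≤ V z - 1 / 2 := by
  set I : Finset ℤ := Finset.Icc (min x₀ Lm) (max x₀ Lp) with hI
  have hIne : I.Nonempty := Finset.nonempty_Icc.mpr (by omega)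
  set ρ : ℝ := I.inf' hIne (fun z => min (H (α + β * z)) (1 - H (α + β * z))) with hρ
  have hρpos : 0 < ρ := by
    rw [hρ, Finset.lt_inf'_iff]
    intro z hz
    have h := hp z
    exact lt_min h.1 (by linarith [h.2])
  have hρle : ∀ z ∈ I, ρ ≤ H (α + β * z) := fun z hz =>
    le_trans (Finset.inf'_le _ hz) (min_le_left _ _)
  have hρle' : ∀ z ∈ I, ρ ≤ 1 - H (α + β * z) := fun z hz =>
    le_trans (Finset.inf'_le _ hz) (min_le_right _ _)
  have hρ1 : ρ ≤ 1 := by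
    obtain ⟨z, hz⟩ := hIne
    have h := hρle z hz
    have := (hp z).2
    linarith
  set R : ℝ := 2 / ρ with hR
  have hRpos : 0 < R := by rw [hR]; positivity
  have hρR : ρ * R = 2 := by rw [hR]; field_simp
  have hR1 : 1 ≤ R := by rw [hR, le_div_iff₀ hρpos]; linarith
  set d : ℤ → ℝ := fun z => if z ≤ x₀ then -(R ^ (z - Lm).toNat) else R ^ (Lp + 1 - z).toNat
    with hd
  set V : ℤ → ℝ := fun z =>
      (∑ j ∈ Finset.Icc (x₀ + 1) z, d j) - ∑ j ∈ Finset.Icc (z + 1) x₀, d j with hV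
  have hdpos : ∀ j : ℤ, x₀ + 1 ≤ j → d j = R ^ (Lp + 1 - j).toNat := by
    intro j hj; simp only [hd]; rw [if_neg (by omega)]
  have hdneg : ∀ j : ℤ, j ≤ x₀ → d j = -(R ^ (j - Lm).toNat) := by
    intro j hj; simp only [hd]; rw [if_pos hj]
  have hV0 : ∀ z, 0 ≤ V z := by
    intro z
    simp only [hV]
    have h1 : 0 ≤ ∑ j ∈ Finset.Icc (x₀ + 1) z, d j := by
      apply Finset.sum_nonneg
      intro j hj
      rw [hdpos j (Finset.mem_Icc.mp hj).1]
      positivity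
    have h2 : ∑ j ∈ Finset.Icc (z + 1) x₀, d j ≤ 0 := by
      apply Finset.sum_nonpos
      intro j hj
      rw [hdneg j (Finset.mem_Icc.mp hj).2]
      simp only [neg_nonpos]
      positivity
    linarith
  have hstep : ∀ z : ℤ, V z - V (z - 1) = d z := by
    intro z
    simp only [hV]
    by_cases hz : x₀ + 1 ≤ z
    · have e1 : Finset.Icc (z + 1) x₀ = ∅ := Finset.Icc_eq_empty (by omega)
      have e2 : Finset.Icc (z - 1 + 1) x₀ = ∅ := Finset.Icc_eq_empty (by omega)
      have e3 : Finset.Icc (x₀ + 1) z = insert z (Finset.Icc (x₀ + 1) (z - 1)) := by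
        ext j
        simp only [Finset.mem_Icc, Finset.mem_insert]
        omega
      rw [e1, e2, e3, Finset.sum_insert (by simp only [Finset.mem_Icc]; omega)]
      simp only [Finset.sum_empty]
      ring
    · have e1 : Finset.Icc (x₀ + 1) z = ∅ := Finset.Icc_eq_empty (by omega)
      have e2 : Finset.Icc (x₀ + 1) (z - 1) = ∅ := Finset.Icc_eq_empty (by omega)
      have e3 : Finset.Icc (z - 1 + 1) x₀ = insert z (Finset.Icc (z + 1) x₀) := by
        ext j
        simp only [Finset.mem_Icc, Finset.mem_insert]
        omega
      rw [e1, e2, e3, Finset.sum_insert (by simp only [Finset.mem_Icc]; omega)]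
      simp only [Finset.sum_empty]
      ring
  have hkey : ∀ z : ℤ, z ≠ x₀ →
      (1 - H (α + β * z)) * d (z + 1) - H (α + β * z) * d z ≤ -(1 / 2) := by
    intro z hz
    have hpz := hp z
    by_cases hle : z ≤ x₀
    · have hzx : z + 1 ≤ x₀ := by omega
      rw [hdneg z hle, hdneg (z + 1) hzx]
      by_cases h2 : z ≤ Lm - 1
      · have t1 : (z - Lm).toNat = 0 := by omega
        have t2 : (z + 1 - Lm).toNat = 0 := by omega
        rw [t1, t2, pow_zero]
        have := hminus z h2
        linarith
      · have hzI : z ∈ I := by rw [hI, Finset.mem_Icc]; omega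
        have hq := hρle' z hzI
        have t2 : (z + 1 - Lm).toNat = (z - Lm).toNat + 1 := by omega
        rw [t2, pow_succ]
        have hRk : (1 : ℝ) ≤ R ^ (z - Lm).toNat := one_le_pow₀ hR1
        have hc : H (α + β * z) - (1 - H (α + β * z)) * R ≤ -1 := by
          have hm := mul_le_mul_of_nonneg_right hq (le_of_lt hRpos)
          rw [hρR] at hm
          linarith [hpz.2]
        nlinarith [mul_le_mul_of_nonneg_left hc
          (by positivity : (0 : ℝ) ≤ R ^ (z - Lm).toNat), hRk]
    · have hz1 : x₀ + 1 ≤ z := by omega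
      rw [hdpos z hz1, hdpos (z + 1) (by omega)]
      by_cases h2 : Lp + 1 ≤ z
      · have t1 : (Lp + 1 - z).toNat = 0 := by omega
        have t2 : (Lp + 1 - (z + 1)).toNat = 0 := by omega
        rw [t1, t2, pow_zero]
        have := hplus z h2
        linarith
      · have hzI : z ∈ I := by rw [hI, Finset.mem_Icc]; omega
        have hq := hρle z hzI
        have t1 : (Lp + 1 - z).toNat = (Lp + 1 - (z + 1)).toNat + 1 := by omega
        rw [t1, pow_succ]
        have hRk : (1 : ℝ) ≤ R ^ (Lp + 1 - (z + 1)).toNat := one_le_pow₀ hR1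
        have hc : (1 - H (α + β * z)) - H (α + β * z) * R ≤ -1 := by
          have hm := mul_le_mul_of_nonneg_right hq (le_of_lt hRpos)
          rw [hρR] at hm
          linarith [hpz.1]
        nlinarith [mul_le_mul_of_nonneg_left hc
          (by positivity : (0 : ℝ) ≤ R ^ (Lp + 1 - (z + 1)).toNat), hRk]
  refine ⟨V, hV0, ?_⟩
  intro z hz
  have h1 : V (z - 1) = V z - d z := by have := hstep z; linarith
  have h2 : V (z + 1) = V z + d (z + 1) := by
    have := hstep (z + 1)
    simp only [add_sub_cancel_right] at this
    linarith
  rw [h1, h2]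
  nlinarith [hkey z hz]

end Lyapunov
section Analytic

open Filter Real MeasureTheory Set

lemma logistic_pos (a : ℝ) : 0 < logisticSigmoid a := by
  rw [logisticSigmoid]
  have := Real.exp_pos (-a)
  positivity

lemma logistic_lt_one (a : ℝ) : logisticSigmoid a < 1 := by
  rw [logisticSigmoid]
  have h := Real.exp_pos (-a)
  rw [div_lt_one (by linarith)]
  linarith

lemma logistic_atTop : Tendsto logisticSigmoid atTop (nhds 1) := by
  have hexp : Tendsto (fun a : ℝ => Real.exp (-a)) atTop (nhds 0) :=
    Real.tendsto_exp_atBot.comp tendsto_neg_atTop_atBot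
  have h : Tendsto (fun a : ℝ => 1 / (1 + Real.exp (-a))) atTop (nhds (1 / (1 + 0))) :=
    Tendsto.div tendsto_const_nhds (Tendsto.const_add 1 hexp) (by norm_num)
  unfold logisticSigmoid
  simpa using h

lemma logistic_atBot : Tendsto logisticSigmoid atBot (nhds 0) := by
  have hexp : Tendsto (fun a : ℝ => Real.exp (-a)) atBot atTop :=
    Real.tendsto_exp_atTop.comp tendsto_neg_atBot_atTop
  have h2 : Tendsto (fun a : ℝ => 1 + Real.exp (-a)) atBot atTop :=
    tendsto_atTop_add_const_left _ 1 hexp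
  have h3 := h2.inv_tendsto_atTop
  unfold logisticSigmoid
  simpa [one_div, Pi.inv_def] using h3

lemma phi_integrable :
    Integrable (fun t : ℝ => (Real.sqrt (2 * Real.pi))⁻¹ * Real.exp (-(t ^ 2) / 2)) := by
  have h2 : Integrable (fun t : ℝ => Real.exp (-(1 / 2 : ℝ) * t ^ 2)) :=
    integrable_exp_neg_mul_sq (by norm_num)
  have h3 := h2.const_mul ((Real.sqrt (2 * Real.pi))⁻¹)
  have hpt : ∀ t : ℝ, -(1 / 2 : ℝ) * t ^ 2 = -(t ^ 2) / 2 := fun t => by ring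
  simpa only [hpt] using h3

lemma phi_total :
    ∫ t : ℝ, (Real.sqrt (2 * Real.pi))⁻¹ * Real.exp (-(t ^ 2) / 2) = 1 := by
  rw [MeasureTheory.integral_const_mul]
  have hpt : ∀ t : ℝ, -(t ^ 2) / 2 = -(1 / 2 : ℝ) * t ^ 2 := fun t => by ring
  simp only [hpt]
  rw [integral_gaussian, show Real.pi / (1 / 2 : ℝ) = 2 * Real.pi by ring]
  exact inv_mul_cancel₀ (ne_of_gt (Real.sqrt_pos.mpr (by positivity)))

lemma phi_setIntegral_pos {s : Set ℝ} (hs : MeasurableSet s) (hvol : volume s = ⊤) :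
    0 < ∫ t in s, (Real.sqrt (2 * Real.pi))⁻¹ * Real.exp (-(t ^ 2) / 2) := by
  rw [MeasureTheory.setIntegral_pos_iff_support_of_nonneg_ae
    (MeasureTheory.ae_of_all _ (fun t => by positivity)) phi_integrable.integrableOn]
  have hsupp : Function.support
      (fun t : ℝ => (Real.sqrt (2 * Real.pi))⁻¹ * Real.exp (-(t ^ 2) / 2)) = Set.univ := by
    ext t
    simp only [Function.mem_support, Set.mem_univ, iff_true]
    exact ne_of_gt (by positivity)
  rw [hsupp, Set.univ_inter, hvol]
  exact ENNReal.zero_lt_top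

lemma stdNormalCDF_pos (a : ℝ) : 0 < stdNormalCDF a :=
  phi_setIntegral_pos (s := Set.Iic a) measurableSet_Iic Real.volume_Iic

lemma stdNormalCDF_split (a : ℝ) :
    stdNormalCDF a + ∫ t in Set.Ioi a, (Real.sqrt (2 * Real.pi))⁻¹ * Real.exp (-(t ^ 2) / 2)
      = 1 := by
  rw [stdNormalCDF,
    intervalIntegral.integral_Iic_add_Ioi phi_integrable.integrableOn phi_integrable.integrableOn,
    phi_total]

lemma stdNormalCDF_lt_one (a : ℝ) : stdNormalCDF a < 1 := by
  have h := stdNormalCDF_split a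
  have hpos := phi_setIntegral_pos (s := Set.Ioi a) measurableSet_Ioi Real.volume_Ioi
  linarith

lemma stdNormalCDF_mono : Monotone stdNormalCDF := by
  intro a b hab
  exact MeasureTheory.setIntegral_mono_set phi_integrable.integrableOn
    (MeasureTheory.ae_of_all _ (fun t => by positivity))
    (HasSubset.Subset.eventuallyLE (Set.Iic_subset_Iic.mpr hab))

lemma stdNormalCDF_atTop : Tendsto stdNormalCDF atTop (nhds 1) := by
  have hU : ⋃ n : ℕ, Set.Iic ((n : ℝ)) = Set.univ := by
    ext x
    simp only [Set.mem_iUnion, Set.mem_Iic, Set.mem_univ, iff_true]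
    exact exists_nat_ge x
  have hseq : Tendsto (fun n : ℕ => stdNormalCDF n) atTop (nhds 1) := by
    have h := MeasureTheory.tendsto_setIntegral_of_monotone
      (s := fun n : ℕ => Set.Iic ((n : ℝ)))
      (fun n => measurableSet_Iic)
      (fun m n hmn => Set.Iic_subset_Iic.mpr (by exact_mod_cast hmn))
      (f := fun t : ℝ => (Real.sqrt (2 * Real.pi))⁻¹ * Real.exp (-(t ^ 2) / 2))
      (μ := volume)
      (by rw [hU]; exact phi_integrable.integrableOn)
    rw [hU, MeasureTheory.setIntegral_univ, phi_total] at h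
    exact h
  refine tendsto_order.2 ⟨fun c hc => ?_, fun c hc => ?_⟩
  · obtain ⟨N, hN⟩ := (hseq.eventually (eventually_gt_nhds hc)).exists
    filter_upwards [eventually_ge_atTop ((N : ℝ))] with a ha
    exact lt_of_lt_of_le hN (stdNormalCDF_mono ha)
  · exact Eventually.of_forall fun a => lt_trans (stdNormalCDF_lt_one a) hc

lemma stdNormalCDF_atBot : Tendsto stdNormalCDF atBot (nhds 0) := by
  have hU : ⋃ n : ℕ, Set.Ioi (-(n : ℝ)) = Set.univ := by
    ext x
    simp only [Set.mem_iUnion, Set.mem_Ioi, Set.mem_univ, iff_true]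
    obtain ⟨n, hn⟩ := exists_nat_gt (-x)
    exact ⟨n, by linarith⟩
  have hseq : Tendsto
      (fun n : ℕ => ∫ t in Set.Ioi (-(n : ℝ)),
        (Real.sqrt (2 * Real.pi))⁻¹ * Real.exp (-(t ^ 2) / 2)) atTop (nhds 1) := by
    have h := MeasureTheory.tendsto_setIntegral_of_monotone
      (s := fun n : ℕ => Set.Ioi (-(n : ℝ)))
      (fun n => measurableSet_Ioi)
      (fun m n hmn => Set.Ioi_subset_Ioi (by exact_mod_cast neg_le_neg (Nat.cast_le.mpr hmn)))
      (f := fun t : ℝ => (Real.sqrt (2 * Real.pi))⁻¹ * Real.exp (-(t ^ 2) / 2))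
      (μ := volume)
      (by rw [hU]; exact phi_integrable.integrableOn)
    rw [hU, MeasureTheory.setIntegral_univ, phi_total] at h
    exact h
  refine tendsto_order.2 ⟨fun c hc => ?_, fun c hc => ?_⟩
  · exact Eventually.of_forall fun a => lt_trans hc (stdNormalCDF_pos a)
  · obtain ⟨N, hN⟩ := (hseq.eventually (eventually_gt_nhds (show 1 - c < 1 by linarith))).exists
    filter_upwards [eventually_le_atBot (-(N : ℝ))] with a ha
    have hsplit := stdNormalCDF_split (-(N : ℝ))
    have hmono := stdNormalCDF_mono ha
    linarith

end Analytic

section Thresholds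

open Filter

lemma bruceton_thresholds {H : ℝ → ℝ} {α β : ℝ} (hβ : 0 < β)
    (h1 : Tendsto H atTop (nhds 1)) (h0 : Tendsto H atBot (nhds 0)) :
    ∃ Lm Lp : ℤ, Lm ≤ Lp ∧ (∀ z : ℤ, Lp + 1 ≤ z → 3 / 4 ≤ H (α + β * z)) ∧
      (∀ z : ℤ, z ≤ Lm - 1 → H (α + β * z) ≤ 1 / 4) := by
  obtain ⟨A, hA⟩ := eventually_atTop.mp (h1.eventually (eventually_ge_nhds (by norm_num :
    (3 / 4 : ℝ) < 1)))
  obtain ⟨B, hB⟩ := eventually_atBot.mp (h0.eventually (eventually_le_nhds (by norm_num :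
    (0 : ℝ) < 1 / 4)))
  obtain ⟨np, hnp⟩ := exists_int_gt ((A - α) / β)
  obtain ⟨nm, hnm⟩ := exists_int_lt ((B - α) / β)
  refine ⟨min nm np, max nm np, by omega, ?_, ?_⟩
  · intro z hz
    apply hA
    have hz' : (np : ℝ) ≤ (z : ℝ) := by exact_mod_cast (by omega : np ≤ z)
    have h : (A - α) / β < (z : ℝ) := lt_of_lt_of_le hnp hz'
    rw [div_lt_iff₀ hβ] at h
    nlinarith
  · intro z hz
    apply hB
    have hz' : (z : ℝ) ≤ (nm : ℝ) := by exact_mod_cast (by omega : z ≤ nm)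
    have h : (z : ℝ) < (B - α) / β := lt_of_le_of_lt hz' hnm
    rw [lt_div_iff₀ hβ] at h
    nlinarith

end Thresholds

open Filter in
/-- For `H` the logistic or probit cdf, `α ∈ ℝ` and `β > 0`, the Bruceton chain on `ℤ`
with `P(x,x−1) = H(α+βx)`, `P(x,x+1) = 1 − H(α+βx)` is irreducible (any state reaches
any other in some `n ≥ 1` steps with positive probability) and positive recurrent
(from any state, the chain returns to it almost surely and the expected first return
time is finite). -/
theorem stmt_7 (H : ℝ → ℝ) (hH : H = logisticSigmoid ∨ H = stdNormalCDF)
    (α β : ℝ) (hβ : 0 < β) :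
    (∀ x x' : ℤ, ∃ n : ℕ, 1 ≤ n ∧ 0 < brucetonPn H α β n x x') ∧
    (∀ x : ℤ,
      HasSum (fun n : ℕ => brucetonFirstHit H α β x n x) 1 ∧
      Summable (fun n : ℕ => (n : ℝ) * brucetonFirstHit H α β x n x)) := by
  have hp : ∀ z : ℤ, 0 < H (α + β * z) ∧ H (α + β * z) < 1 := by
    rcases hH with h | h <;> subst h
    · exact fun z => ⟨logistic_pos _, logistic_lt_one _⟩
    · exact fun z => ⟨stdNormalCDF_pos _, stdNormalCDF_lt_one _⟩
  have hlim : Tendsto H atTop (nhds 1) ∧ Tendsto H atBot (nhds 0) := by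
    rcases hH with h | h <;> subst h
    · exact ⟨logistic_atTop, logistic_atBot⟩
    · exact ⟨stdNormalCDF_atTop, stdNormalCDF_atBot⟩
  constructor
  · intro x x'
    rcases lt_trichotomy x x' with h | h | h
    · refine ⟨(x' - x).toNat, by omega, ?_⟩
      have hup := brucetonPn_up hp (x' - x).toNat x
      have hco : x + (((x' - x).toNat : ℕ) : ℤ) = x' := by omega
      rwa [hco] at hup
    · subst h
      exact ⟨2, by norm_num, brucetonPn_return hp x⟩
    · refine ⟨(x - x').toNat, by omega, ?_⟩
      have hdn := brucetonPn_down hp (x - x').toNat x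
      have hco : x - (((x - x').toNat : ℕ) : ℤ) = x' := by omega
      rwa [hco] at hdn
  · intro x
    obtain ⟨Lm, Lp, hLL, hPl, hMn⟩ := bruceton_thresholds (α := α) hβ hlim.1 hlim.2
    obtain ⟨V, hV0, hVd⟩ := bruceton_exists_V hp Lm Lp hLL hPl hMn x
    exact bruceton_posrec hp x V hV0 hVd
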